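/- Let V : [0, ε) → ℝ be real-analytic with V(0) > 1, V'(0) = 0, V'''(0) = 0, and suppose V solves the fifth-order ODE 3r⁴VV⁽⁵⁾ + 6r⁴V'V⁽⁴⁾ + 30r³VV⁽⁴⁾ + 44r³V'V⁽³⁾ + r²(47V − 32)V⁽³⁾ + 8r³(V'')² − 3r(13V + 32)V'' + 26r²V'V'' − 34r(V')² + 3V'(13V + 32) = 0 on (0, ε). Then V(r) = V₀ + V₂r²/2 for constants V₀ = V(0) and V₂ = V''(0); i.e., V is a quadratic polynomial in r with no odd or quartic and higher terms. -/

import Mathlib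

/-- The fifth-order supersymmetry ODE (4.14) as an expression in `V` and `r`. -/
noncomputable def ODE5 (V : ℝ → ℝ) (r : ℝ) : ℝ :=
  3 * r ^ 4 * V r * iteratedDeriv 5 V r + 6 * r ^ 4 * deriv V r * iteratedDeriv 4 V r
    + 30 * r ^ 3 * V r * iteratedDeriv 4 V r + 44 * r ^ 3 * deriv V r * iteratedDeriv 3 V r
    + r ^ 2 * (47 * V r - 32) * iteratedDeriv 3 V r + 8 * r ^ 3 * (iteratedDeriv 2 V r) ^ 2
    - 3 * r * (13 * V r + 32) * iteratedDeriv 2 V r + 26 * r ^ 2 * deriv V r * iteratedDeriv 2 V r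
    - 34 * r * (deriv V r) ^ 2 + 3 * deriv V r * (13 * V r + 32)

open Filter Topology Set

private lemma bh_idw_open {s : Set ℝ} {x : ℝ} {f : ℝ → ℝ} (n : ℕ) (hs : IsOpen s)
    (hx : x ∈ s) : iteratedDerivWithin n f s x = iteratedDeriv n f x := by
  rw [iteratedDerivWithin_eq_iteratedFDerivWithin, iteratedDeriv_eq_iteratedFDeriv,
    iteratedFDerivWithin_of_isOpen n hs hx]

private lemma bh_an_iter {f : ℝ → ℝ} {u : Set ℝ} (hf : AnalyticOnNhd ℝ f u) (j : ℕ) :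
    AnalyticOnNhd ℝ (iteratedDeriv j f) u := by
  induction j with
  | zero => simpa [iteratedDeriv_zero] using hf
  | succ n ih => rw [iteratedDeriv_succ]; exact ih.deriv

private lemma bh_coeff {f : ℝ → ℝ} {p : FormalMultilinearSeries ℝ ℝ ℝ}
    (hp : HasFPowerSeriesAt f p 0) (k : ℕ) :
    (k.factorial : ℝ) * p.coeff k = iteratedDeriv k f 0 := by
  obtain ⟨R, hR⟩ := hp
  have h2 := hR.factorial_smul (1 : ℝ) k
  rw [iteratedDeriv_eq_iteratedFDeriv, ← h2, nsmul_eq_mul]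
  congr 1

private lemma bh_term {H : ℝ → ℝ} {H' x : ℝ} (C : ℝ) (e : ℕ) (hH : HasDerivAt H H' x) :
    HasDerivAt (fun z => C * z ^ e * H z) (C * (↑e * x ^ (e-1)) * H x + C * x ^ e * H') x :=
  ((hasDerivAt_pow e x).const_mul C).mul hH

private lemma bh_term1 {H : ℝ → ℝ} {H' x : ℝ} (e : ℕ) (hH : HasDerivAt H H' x) :
    HasDerivAt (fun z => z ^ e * H z) (↑e * x ^ (e-1) * H x + x ^ e * H') x :=
  (hasDerivAt_pow e x).mul hH

private noncomputable def Gf (M : ℕ) (a0 c2 : ℝ) (w : ℝ → ℝ) (x : ℝ) : ℝ :=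
  a0 + c2 * x ^ 2 + x ^ (M+4) * w x

private noncomputable def G1 (M : ℕ) (a0 c2 : ℝ) (w : ℝ → ℝ) (x : ℝ) : ℝ :=
  2*c2*x + ((M:ℝ)+4) * x ^ (M+3) * w x + x ^ (M+4) * iteratedDeriv 1 w x

private noncomputable def G2 (M : ℕ) (a0 c2 : ℝ) (w : ℝ → ℝ) (x : ℝ) : ℝ :=
  2*c2 + ((M:ℝ)+4)*((M:ℝ)+3) * x ^ (M+2) * w x + 2*((M:ℝ)+4) * x ^ (M+3) * iteratedDeriv 1 w x
    + x ^ (M+4) * iteratedDeriv 2 w x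

private noncomputable def G3 (M : ℕ) (a0 c2 : ℝ) (w : ℝ → ℝ) (x : ℝ) : ℝ :=
  ((M:ℝ)+4)*((M:ℝ)+3)*((M:ℝ)+2) * x ^ (M+1) * w x
    + 3*((M:ℝ)+4)*((M:ℝ)+3) * x ^ (M+2) * iteratedDeriv 1 w x
    + 3*((M:ℝ)+4) * x ^ (M+3) * iteratedDeriv 2 w x + x ^ (M+4) * iteratedDeriv 3 w x

private noncomputable def G4 (M : ℕ) (a0 c2 : ℝ) (w : ℝ → ℝ) (x : ℝ) : ℝ :=
  ((M:ℝ)+4)*((M:ℝ)+3)*((M:ℝ)+2)*((M:ℝ)+1) * x ^ M * w x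
    + 4*((M:ℝ)+4)*((M:ℝ)+3)*((M:ℝ)+2) * x ^ (M+1) * iteratedDeriv 1 w x
    + 6*((M:ℝ)+4)*((M:ℝ)+3) * x ^ (M+2) * iteratedDeriv 2 w x
    + 4*((M:ℝ)+4) * x ^ (M+3) * iteratedDeriv 3 w x + x ^ (M+4) * iteratedDeriv 4 w x

private noncomputable def G5 (M : ℕ) (a0 c2 : ℝ) (w : ℝ → ℝ) (x : ℝ) : ℝ :=
  ((M:ℝ)+4)*((M:ℝ)+3)*((M:ℝ)+2)*((M:ℝ)+1) * ((M:ℝ) * x ^ (M-1)) * w x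
    + 5*((M:ℝ)+4)*((M:ℝ)+3)*((M:ℝ)+2)*((M:ℝ)+1) * x ^ M * iteratedDeriv 1 w x
    + 10*((M:ℝ)+4)*((M:ℝ)+3)*((M:ℝ)+2) * x ^ (M+1) * iteratedDeriv 2 w x
    + 10*((M:ℝ)+4)*((M:ℝ)+3) * x ^ (M+2) * iteratedDeriv 3 w x
    + 5*((M:ℝ)+4) * x ^ (M+3) * iteratedDeriv 4 w x + x ^ (M+4) * iteratedDeriv 5 w x

private noncomputable def PsiA (M : ℕ) (a0 c2 : ℝ) (w : ℝ → ℝ) (x : ℝ) : ℝ :=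
  (-1536) * w x
      + (-1408) * (M:ℝ) * w x
      + (-384) * (M:ℝ)^2 * w x
      + (-32) * (M:ℝ)^3 * w x
      + 1536 * a0 * w x
      + 2560 * a0 * (M:ℝ) * w x
      + 1584 * a0 * (M:ℝ)^2 * w x
      + 452 * a0 * (M:ℝ)^3 * w x
      + 60 * a0 * (M:ℝ)^4 * w x
      + 3 * a0 * (M:ℝ)^5 * w x
      + (-1824) * x * (iteratedDeriv 1 w x)
      + (-864) * x * (M:ℝ) * (iteratedDeriv 1 w x)
      + (-96) * x * (M:ℝ)^2 * (iteratedDeriv 1 w x)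
      + 4659 * x * a0 * (iteratedDeriv 1 w x)
      + 4779 * x * a0 * (M:ℝ) * (iteratedDeriv 1 w x)
      + 1746 * x * a0 * (M:ℝ)^2 * (iteratedDeriv 1 w x)
      + 270 * x * a0 * (M:ℝ)^3 * (iteratedDeriv 1 w x)
      + 15 * x * a0 * (M:ℝ)^4 * (iteratedDeriv 1 w x)
      + (-480) * x^2 * (iteratedDeriv 2 w x)
      + (-96) * x^2 * (M:ℝ) * (iteratedDeriv 2 w x)
      + 4608 * x^2 * c2 * w x
      + 5952 * x^2 * c2 * (M:ℝ) * w x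
      + 2880 * x^2 * c2 * (M:ℝ)^2 * w x
      + 660 * x^2 * c2 * (M:ℝ)^3 * w x
      + 72 * x^2 * c2 * (M:ℝ)^4 * w x
      + 3 * x^2 * c2 * (M:ℝ)^5 * w x
      + 3405 * x^2 * a0 * (iteratedDeriv 2 w x)
      + 2181 * x^2 * a0 * (M:ℝ) * (iteratedDeriv 2 w x)
      + 450 * x^2 * a0 * (M:ℝ)^2 * (iteratedDeriv 2 w x)
      + 30 * x^2 * a0 * (M:ℝ)^3 * (iteratedDeriv 2 w x)
      + (-32) * x^3 * (iteratedDeriv 3 w x)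
      + 9567 * x^3 * c2 * (iteratedDeriv 1 w x)
      + 8043 * x^3 * c2 * (M:ℝ) * (iteratedDeriv 1 w x)
      + 2442 * x^3 * c2 * (M:ℝ)^2 * (iteratedDeriv 1 w x)
      + 318 * x^3 * c2 * (M:ℝ)^3 * (iteratedDeriv 1 w x)
      + 15 * x^3 * c2 * (M:ℝ)^4 * (iteratedDeriv 1 w x)
      + 887 * x^3 * a0 * (iteratedDeriv 3 w x)
      + 330 * x^3 * a0 * (M:ℝ) * (iteratedDeriv 3 w x)
      + 30 * x^3 * a0 * (M:ℝ)^2 * (iteratedDeriv 3 w x)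
      + 5409 * x^4 * c2 * (iteratedDeriv 2 w x)
      + 2949 * x^4 * c2 * (M:ℝ) * (iteratedDeriv 2 w x)
      + 522 * x^4 * c2 * (M:ℝ)^2 * (iteratedDeriv 2 w x)
      + 30 * x^4 * c2 * (M:ℝ)^3 * (iteratedDeriv 2 w x)
      + 90 * x^4 * a0 * (iteratedDeriv 4 w x)
      + 15 * x^4 * a0 * (M:ℝ) * (iteratedDeriv 4 w x)
      + 1167 * x^5 * c2 * (iteratedDeriv 3 w x)
      + 378 * x^5 * c2 * (M:ℝ) * (iteratedDeriv 3 w x)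
      + 30 * x^5 * c2 * (M:ℝ)^2 * (iteratedDeriv 3 w x)
      + 3 * x^5 * a0 * (iteratedDeriv 5 w x)
      + 102 * x^6 * c2 * (iteratedDeriv 4 w x)
      + 15 * x^6 * c2 * (M:ℝ) * (iteratedDeriv 4 w x)
      + 3 * x^7 * c2 * (iteratedDeriv 5 w x)

private noncomputable def PsiB (M : ℕ) (a0 c2 : ℝ) (w : ℝ → ℝ) (x : ℝ) : ℝ :=
  8192 * (w x)^2
      + 11648 * (M:ℝ) * (w x)^2
      + 6288 * (M:ℝ)^2 * (w x)^2
      + 1612 * (M:ℝ)^3 * (w x)^2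
      + 196 * (M:ℝ)^4 * (w x)^2
      + 9 * (M:ℝ)^5 * (w x)^2
      + 16907 * x * w x * (iteratedDeriv 1 w x)
      + 16385 * x * (M:ℝ) * w x * (iteratedDeriv 1 w x)
      + 5722 * x * (M:ℝ)^2 * w x * (iteratedDeriv 1 w x)
      + 850 * x * (M:ℝ)^3 * w x * (iteratedDeriv 1 w x)
      + 45 * x * (M:ℝ)^4 * w x * (iteratedDeriv 1 w x)
      + 2846 * x^2 * ((iteratedDeriv 1 w x))^2
      + 7541 * x^2 * w x * (iteratedDeriv 2 w x)
      + 1856 * x^2 * (M:ℝ) * ((iteratedDeriv 1 w x))^2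
      + 4815 * x^2 * (M:ℝ) * w x * (iteratedDeriv 2 w x)
      + 380 * x^2 * (M:ℝ)^2 * ((iteratedDeriv 1 w x))^2
      + 994 * x^2 * (M:ℝ)^2 * w x * (iteratedDeriv 2 w x)
      + 24 * x^2 * (M:ℝ)^3 * ((iteratedDeriv 1 w x))^2
      + 66 * x^2 * (M:ℝ)^3 * w x * (iteratedDeriv 2 w x)
      + 1114 * x^3 * (iteratedDeriv 1 w x) * (iteratedDeriv 2 w x)
      + 1447 * x^3 * w x * (iteratedDeriv 3 w x)
      + 416 * x^3 * (M:ℝ) * (iteratedDeriv 1 w x) * (iteratedDeriv 2 w x)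
      + 566 * x^3 * (M:ℝ) * w x * (iteratedDeriv 3 w x)
      + 36 * x^3 * (M:ℝ)^2 * (iteratedDeriv 1 w x) * (iteratedDeriv 2 w x)
      + 54 * x^3 * (M:ℝ)^2 * w x * (iteratedDeriv 3 w x)
      + 8 * x^4 * ((iteratedDeriv 2 w x))^2
      + 140 * x^4 * (iteratedDeriv 1 w x) * (iteratedDeriv 3 w x)
      + 114 * x^4 * w x * (iteratedDeriv 4 w x)
      + 24 * x^4 * (M:ℝ) * (iteratedDeriv 1 w x) * (iteratedDeriv 3 w x)
      + 21 * x^4 * (M:ℝ) * w x * (iteratedDeriv 4 w x)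
      + 6 * x^5 * (iteratedDeriv 1 w x) * (iteratedDeriv 4 w x)
      + 3 * x^5 * w x * (iteratedDeriv 5 w x)

private noncomputable def Psi (M : ℕ) (a0 c2 : ℝ) (w : ℝ → ℝ) (x : ℝ) : ℝ :=
  PsiA M a0 c2 w x + x ^ M * x ^ 4 * PsiB M a0 c2 w x
set_option maxHeartbeats 1000000 in
private lemma bh_key (M : ℕ) (a0 c2 : ℝ) (w : ℝ → ℝ) (x : ℝ) :
    3 * x ^ 4 * Gf M a0 c2 w x * G5 M a0 c2 w x + 6 * x ^ 4 * G1 M a0 c2 w x * G4 M a0 c2 w x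
      + 30 * x ^ 3 * Gf M a0 c2 w x * G4 M a0 c2 w x
      + 44 * x ^ 3 * G1 M a0 c2 w x * G3 M a0 c2 w x
      + x ^ 2 * (47 * Gf M a0 c2 w x - 32) * G3 M a0 c2 w x
      + 8 * x ^ 3 * (G2 M a0 c2 w x) ^ 2
      - 3 * x * (13 * Gf M a0 c2 w x + 32) * G2 M a0 c2 w x
      + 26 * x ^ 2 * G1 M a0 c2 w x * G2 M a0 c2 w x
      - 34 * x * (G1 M a0 c2 w x) ^ 2
      + 3 * G1 M a0 c2 w x * (13 * Gf M a0 c2 w x + 32)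
      = x ^ M * x ^ 3 * Psi M a0 c2 w x := by
  unfold Gf G1 G2 G3 G4 G5 Psi PsiA PsiB
  rcases M with _ | m
  · push_cast
    norm_num
    ring
  · push_cast [Nat.add_sub_cancel]
    ring
private lemma bh_chain {u : Set ℝ} (hu : IsOpen u) {w V : ℝ → ℝ} (hw : AnalyticOnNhd ℝ w u)
    (M : ℕ) (a0 c2 : ℝ) (hVF : ∀ z ∈ u, V z = Gf M a0 c2 w z) :
    ∀ x ∈ u, deriv V x = G1 M a0 c2 w x ∧ iteratedDeriv 2 V x = G2 M a0 c2 w x ∧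
      iteratedDeriv 3 V x = G3 M a0 c2 w x ∧ iteratedDeriv 4 V x = G4 M a0 c2 w x ∧
      iteratedDeriv 5 V x = G5 M a0 c2 w x := by
  have hD : ∀ (j : ℕ) (x : ℝ), x ∈ u → HasDerivAt (iteratedDeriv j w) (iteratedDeriv (j+1) w x) x := by
    intro j x hx
    rw [iteratedDeriv_succ]
    exact ((bh_an_iter hw j x hx).differentiableAt).hasDerivAt
  have hDw : ∀ x ∈ u, HasDerivAt w (iteratedDeriv 1 w x) x := by
    intro x hx
    have h0 := hD 0 x hx
    rwa [iteratedDeriv_zero] at h0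
  have e1 : ∀ x ∈ u, deriv V x = G1 M a0 c2 w x := by
    intro x hx
    have hev : V =ᶠ[𝓝 x] Gf M a0 c2 w := eventuallyEq_of_mem (hu.mem_nhds hx) hVF
    rw [hev.deriv_eq, show Gf M a0 c2 w = fun z => a0 + c2 * z ^ 2 + z ^ (M+4) * w z from rfl]
    have hd : HasDerivAt (fun z => a0 + c2 * z ^ 2 + z ^ (M+4) * w z) (G1 M a0 c2 w x) x := by
      have h0 := ((hasDerivAt_const x a0).add ((hasDerivAt_pow 2 x).const_mul c2)).add
        (bh_term1 (M+4) (hDw x hx))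
      refine h0.congr_deriv ?_
      unfold G1
      push_cast [show M+4-1 = M+3 from rfl]
      norm_num
      ring
    exact hd.deriv
  have e2 : ∀ x ∈ u, iteratedDeriv 2 V x = G2 M a0 c2 w x := by
    intro x hx
    have hev : deriv V =ᶠ[𝓝 x] G1 M a0 c2 w := eventuallyEq_of_mem (hu.mem_nhds hx) e1
    rw [show (2:ℕ) = 1+1 from rfl, iteratedDeriv_succ, iteratedDeriv_one, hev.deriv_eq,
      show G1 M a0 c2 w = fun z => 2*c2*z + ((M:ℝ)+4) * z ^ (M+3) * w z
        + z ^ (M+4) * iteratedDeriv 1 w z from rfl]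
    have hd : HasDerivAt (fun z => 2*c2*z + ((M:ℝ)+4) * z ^ (M+3) * w z
        + z ^ (M+4) * iteratedDeriv 1 w z) (G2 M a0 c2 w x) x := by
      have h0 := (((hasDerivAt_id x).const_mul (2*c2)).add
          (bh_term ((M:ℝ)+4) (M+3) (hDw x hx))).add (bh_term1 (M+4) (hD 1 x hx))
      refine h0.congr_deriv ?_
      unfold G2
      push_cast [show M+4-1 = M+3 from rfl, show M+3-1 = M+2 from rfl]
      norm_num
      ring
    exact hd.deriv
  have e3 : ∀ x ∈ u, iteratedDeriv 3 V x = G3 M a0 c2 w x := by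
    intro x hx
    have hev : iteratedDeriv 2 V =ᶠ[𝓝 x] G2 M a0 c2 w := eventuallyEq_of_mem (hu.mem_nhds hx) e2
    rw [show (3:ℕ) = 2+1 from rfl, iteratedDeriv_succ, hev.deriv_eq,
      show G2 M a0 c2 w = fun z => 2*c2 + ((M:ℝ)+4)*((M:ℝ)+3) * z ^ (M+2) * w z
        + 2*((M:ℝ)+4) * z ^ (M+3) * iteratedDeriv 1 w z
        + z ^ (M+4) * iteratedDeriv 2 w z from rfl]
    have hd : HasDerivAt (fun z => 2*c2 + ((M:ℝ)+4)*((M:ℝ)+3) * z ^ (M+2) * w z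
        + 2*((M:ℝ)+4) * z ^ (M+3) * iteratedDeriv 1 w z
        + z ^ (M+4) * iteratedDeriv 2 w z) (G3 M a0 c2 w x) x := by
      have h0 := (((hasDerivAt_const x (2*c2)).add
          (bh_term (((M:ℝ)+4)*((M:ℝ)+3)) (M+2) (hDw x hx))).add
          (bh_term (2*((M:ℝ)+4)) (M+3) (hD 1 x hx))).add (bh_term1 (M+4) (hD 2 x hx))
      refine h0.congr_deriv ?_
      unfold G3
      push_cast [show M+4-1 = M+3 from rfl, show M+3-1 = M+2 from rfl,
        show M+2-1 = M+1 from rfl]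
      norm_num
      ring
    exact hd.deriv
  have e4 : ∀ x ∈ u, iteratedDeriv 4 V x = G4 M a0 c2 w x := by
    intro x hx
    have hev : iteratedDeriv 3 V =ᶠ[𝓝 x] G3 M a0 c2 w := eventuallyEq_of_mem (hu.mem_nhds hx) e3
    rw [show (4:ℕ) = 3+1 from rfl, iteratedDeriv_succ, hev.deriv_eq,
      show G3 M a0 c2 w = fun z => ((M:ℝ)+4)*((M:ℝ)+3)*((M:ℝ)+2) * z ^ (M+1) * w z
        + 3*((M:ℝ)+4)*((M:ℝ)+3) * z ^ (M+2) * iteratedDeriv 1 w z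
        + 3*((M:ℝ)+4) * z ^ (M+3) * iteratedDeriv 2 w z
        + z ^ (M+4) * iteratedDeriv 3 w z from rfl]
    have hd : HasDerivAt (fun z => ((M:ℝ)+4)*((M:ℝ)+3)*((M:ℝ)+2) * z ^ (M+1) * w z
        + 3*((M:ℝ)+4)*((M:ℝ)+3) * z ^ (M+2) * iteratedDeriv 1 w z
        + 3*((M:ℝ)+4) * z ^ (M+3) * iteratedDeriv 2 w z
        + z ^ (M+4) * iteratedDeriv 3 w z) (G4 M a0 c2 w x) x := by
      have h0 := (((bh_term (((M:ℝ)+4)*((M:ℝ)+3)*((M:ℝ)+2)) (M+1) (hDw x hx)).add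
          (bh_term (3*((M:ℝ)+4)*((M:ℝ)+3)) (M+2) (hD 1 x hx))).add
          (bh_term (3*((M:ℝ)+4)) (M+3) (hD 2 x hx))).add (bh_term1 (M+4) (hD 3 x hx))
      refine h0.congr_deriv ?_
      unfold G4
      push_cast [show M+4-1 = M+3 from rfl, show M+3-1 = M+2 from rfl,
        show M+2-1 = M+1 from rfl, show M+1-1 = M from rfl]
      norm_num
      ring
    exact hd.deriv
  have e5 : ∀ x ∈ u, iteratedDeriv 5 V x = G5 M a0 c2 w x := by
    intro x hx
    have hev : iteratedDeriv 4 V =ᶠ[𝓝 x] G4 M a0 c2 w := eventuallyEq_of_mem (hu.mem_nhds hx) e4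
    rw [show (5:ℕ) = 4+1 from rfl, iteratedDeriv_succ, hev.deriv_eq,
      show G4 M a0 c2 w = fun z => ((M:ℝ)+4)*((M:ℝ)+3)*((M:ℝ)+2)*((M:ℝ)+1) * z ^ M * w z
        + 4*((M:ℝ)+4)*((M:ℝ)+3)*((M:ℝ)+2) * z ^ (M+1) * iteratedDeriv 1 w z
        + 6*((M:ℝ)+4)*((M:ℝ)+3) * z ^ (M+2) * iteratedDeriv 2 w z
        + 4*((M:ℝ)+4) * z ^ (M+3) * iteratedDeriv 3 w z
        + z ^ (M+4) * iteratedDeriv 4 w z from rfl]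
    have hd : HasDerivAt (fun z => ((M:ℝ)+4)*((M:ℝ)+3)*((M:ℝ)+2)*((M:ℝ)+1) * z ^ M * w z
        + 4*((M:ℝ)+4)*((M:ℝ)+3)*((M:ℝ)+2) * z ^ (M+1) * iteratedDeriv 1 w z
        + 6*((M:ℝ)+4)*((M:ℝ)+3) * z ^ (M+2) * iteratedDeriv 2 w z
        + 4*((M:ℝ)+4) * z ^ (M+3) * iteratedDeriv 3 w z
        + z ^ (M+4) * iteratedDeriv 4 w z) (G5 M a0 c2 w x) x := by
      have h0 := ((((bh_term (((M:ℝ)+4)*((M:ℝ)+3)*((M:ℝ)+2)*((M:ℝ)+1)) M (hDw x hx)).add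
          (bh_term (4*((M:ℝ)+4)*((M:ℝ)+3)*((M:ℝ)+2)) (M+1) (hD 1 x hx))).add
          (bh_term (6*((M:ℝ)+4)*((M:ℝ)+3)) (M+2) (hD 2 x hx))).add
          (bh_term (4*((M:ℝ)+4)) (M+3) (hD 3 x hx))).add (bh_term1 (M+4) (hD 4 x hx))
      refine h0.congr_deriv ?_
      unfold G5
      push_cast [show M+4-1 = M+3 from rfl, show M+3-1 = M+2 from rfl,
        show M+2-1 = M+1 from rfl, show M+1-1 = M from rfl]
      norm_num
      ring
    exact hd.deriv
  exact fun x hx => ⟨e1 x hx, e2 x hx, e3 x hx, e4 x hx, e5 x hx⟩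
private lemma bh_cont (M : ℕ) (a0 c2 : ℝ) {w : ℝ → ℝ} {u : Set ℝ} (hu : IsOpen u)
    (h0 : (0:ℝ) ∈ u) (hw : AnalyticOnNhd ℝ w u) : ContinuousAt (Psi M a0 c2 w) 0 := by
  have hc : ∀ j : ℕ, ContinuousAt (iteratedDeriv j w) 0 :=
    fun j => ((bh_an_iter hw j) 0 h0).continuousAt
  have hcw : ContinuousAt w 0 := (hw 0 h0).continuousAt
  unfold Psi PsiA PsiB
  fun_prop

private lemma bh_Kpos (M : ℕ) {a0 : ℝ} (ha : 1 < a0) :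
    0 < (-1536) + (-1408)*(M:ℝ) + (-384)*(M:ℝ)^2 + (-32)*(M:ℝ)^3 + 1536*a0 + 2560*a0*(M:ℝ)
      + 1584*a0*(M:ℝ)^2 + 452*a0*(M:ℝ)^3 + 60*a0*(M:ℝ)^4 + 3*a0*(M:ℝ)^5 := by
  have hm : (0:ℝ) ≤ (M:ℝ) := Nat.cast_nonneg M
  have h1 : 0 < (a0 - 1) * (3*(M:ℝ)^5 + 60*(M:ℝ)^4 + 452*(M:ℝ)^3 + 1584*(M:ℝ)^2
      + 2560*(M:ℝ) + 1536) := by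
    apply mul_pos (by linarith)
    positivity
  have h2 : 0 ≤ 3*(M:ℝ)^5 + 60*(M:ℝ)^4 + 420*(M:ℝ)^3 + 1200*(M:ℝ)^2 + 1152*(M:ℝ) := by
    positivity
  nlinarith [h1, h2]
/-- Core of the black hole uniqueness theorem: a real-analytic solution `V` on `[0, ε)`
of the fifth-order supersymmetry ODE with `V(0) > 1`, `V'(0) = 0` and `V'''(0) = 0`
must be the quadratic `V(r) = V(0) + V''(0) r²/2`. -/
theorem stmt_9 (V : ℝ → ℝ) (ε : ℝ) (hε : 0 < ε)
    (hV : AnalyticOnNhd ℝ V (Set.Ico 0 ε))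
    (hV₀ : 1 < V 0) (h1 : deriv V 0 = 0) (h3 : iteratedDeriv 3 V 0 = 0)
    (hode : ∀ r ∈ Set.Ioo (0 : ℝ) ε, ODE5 V r = 0) :
    ∀ r ∈ Set.Ico (0 : ℝ) ε, V r = V 0 + iteratedDeriv 2 V 0 * r ^ 2 / 2 := by
  have hAV : AnalyticAt ℝ V 0 := hV 0 ⟨le_refl 0, hε⟩
  have hQa : ∀ x : ℝ, AnalyticAt ℝ (fun r : ℝ => V 0 + iteratedDeriv 2 V 0 / 2 * r ^ 2) x :=
    fun x => analyticAt_const.add (analyticAt_const.mul (analyticAt_id.pow 2))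
  suffices hloc : ∀ᶠ z in 𝓝 (0:ℝ), V z - (V 0 + iteratedDeriv 2 V 0 / 2 * z ^ 2) = 0 by
    have hQ : AnalyticOnNhd ℝ (fun r : ℝ => V 0 + iteratedDeriv 2 V 0 / 2 * r ^ 2)
        (Set.Ico 0 ε) := fun x _ => hQa x
    have key := (hV.sub hQ).eqOn_zero_of_preconnected_of_eventuallyEq_zero
      (convex_Ico (0:ℝ) ε).isPreconnected (⟨le_refl 0, hε⟩ : (0:ℝ) ∈ Set.Ico 0 ε)
      (hloc.mono fun z hz => hz)
    intro r hr
    have h2 := key hr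
    simp only [Pi.sub_apply, Pi.zero_apply] at h2
    linarith
  by_contra hcon
  obtain ⟨p, hp⟩ : AnalyticAt ℝ (fun r => V r - (V 0 + iteratedDeriv 2 V 0 / 2 * r ^ 2)) 0 :=
    hAV.sub (hQa 0)
  have hp0 : p ≠ 0 := by
    intro hpz
    rw [hpz] at hp
    exact hcon hp.eventually_eq_zero
  -- open set where V is analytic
  obtain ⟨t, htn, htA⟩ := hAV.exists_mem_nhds_analyticOnNhd
  obtain ⟨s, hst, hs_open, hs0⟩ := mem_nhds_iff.mp htn
  have hVs : AnalyticOnNhd ℝ V s := fun x hx => htA x (hst hx)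
  have hQc : ContDiff ℝ ⊤ (fun r : ℝ => V 0 + iteratedDeriv 2 V 0 / 2 * r ^ 2) := by fun_prop
  have hsplit : ∀ k : ℕ, iteratedDeriv k (fun z => V z
      - (V 0 + iteratedDeriv 2 V 0 / 2 * z ^ 2)) 0
      = iteratedDeriv k V 0 - iteratedDeriv k (fun z : ℝ => V 0
        + iteratedDeriv 2 V 0 / 2 * z ^ 2) 0 := by
    intro k
    rw [← bh_idw_open (f := fun z => V z - (V 0 + iteratedDeriv 2 V 0 / 2 * z ^ 2)) k hs_open hs0,
      ← bh_idw_open (f := V) k hs_open hs0,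
      ← bh_idw_open (f := fun z : ℝ => V 0 + iteratedDeriv 2 V 0 / 2 * z ^ 2) k hs_open hs0]
    exact iteratedDerivWithin_sub hs0 hs_open.uniqueDiffOn
      ((hVs.contDiffOn_of_completeSpace.of_le le_top) 0 hs0) ((hQc.contDiffOn.of_le le_top) 0 hs0)
  -- derivatives of the quadratic
  have hQ1 : deriv (fun r : ℝ => V 0 + iteratedDeriv 2 V 0 / 2 * r ^ 2)
      = fun r => (2 * (iteratedDeriv 2 V 0 / 2)) * r := by
    ext r; simp [deriv_const_add]; ring
  have hQ2 : iteratedDeriv 2 (fun r : ℝ => V 0 + iteratedDeriv 2 V 0 / 2 * r ^ 2)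
      = fun _ => 2 * (iteratedDeriv 2 V 0 / 2) := by
    rw [show (2:ℕ) = 1 + 1 from rfl, iteratedDeriv_succ, iteratedDeriv_one, hQ1]
    ext r; simpa using ((hasDerivAt_id r).const_mul (2 * (iteratedDeriv 2 V 0 / 2))).deriv
  have hQ3 : iteratedDeriv 3 (fun r : ℝ => V 0 + iteratedDeriv 2 V 0 / 2 * r ^ 2)
      = fun _ => 0 := by
    rw [show (3:ℕ) = 2 + 1 from rfl, iteratedDeriv_succ, hQ2]
    ext r; simp
  -- the first four coefficients vanish
  have hco := bh_coeff hp
  have hc0 : p.coeff 0 = 0 := by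
    have h0 := hco 0
    simp only [Nat.factorial_zero, Nat.cast_one, one_mul, iteratedDeriv_zero] at h0
    rw [h0]; norm_num
  have hc1 : p.coeff 1 = 0 := by
    have h0 := hco 1
    rw [iteratedDeriv_one, show (fun z => V z - (V 0 + iteratedDeriv 2 V 0 / 2 * z ^ 2))
      = fun z => V z - (V 0 + iteratedDeriv 2 V 0 / 2 * z ^ 2) from rfl] at h0
    have hd : deriv (fun z => V z - (V 0 + iteratedDeriv 2 V 0 / 2 * z ^ 2)) 0
        = deriv V 0 - deriv (fun z : ℝ => V 0 + iteratedDeriv 2 V 0 / 2 * z ^ 2) 0 :=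
      deriv_fun_sub hAV.differentiableAt (hQc.differentiable (by simp)).differentiableAt
    rw [hd, hQ1, h1] at h0
    simp only [Nat.factorial_one, Nat.cast_one, one_mul] at h0
    rw [h0]; norm_num
  have hc2 : p.coeff 2 = 0 := by
    have h0 := hco 2
    rw [hsplit 2, hQ2] at h0
    have : (Nat.factorial 2 : ℝ) * p.coeff 2 = 0 := by rw [h0]; ring
    simpa [Nat.factorial] using this
  have hc3 : p.coeff 3 = 0 := by
    have h0 := hco 3
    rw [hsplit 3, hQ3, h3] at h0
    have : (Nat.factorial 3 : ℝ) * p.coeff 3 = 0 := by rw [h0]; ring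
    simpa [Nat.factorial] using this
  have hne : p.coeff p.order ≠ 0 := by
    simpa [FormalMultilinearSeries.coeff_eq_zero] using p.apply_order_ne_zero hp0
  have h4 : 4 ≤ p.order := by
    by_contra hlt
    push_neg at hlt
    set n := p.order with hn
    interval_cases n
    exacts [hne hc0, hne hc1, hne hc2, hne hc3]
  set M := p.order - 4 with hMdef
  have hMeq : p.order = M + 4 := by omega
  have hfac0 := hp.eq_pow_order_mul_iterate_dslope
  set w := (Function.swap dslope (0:ℝ))^[p.order]
    (fun r => V r - (V 0 + iteratedDeriv 2 V 0 / 2 * r ^ 2)) with hwdef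
  have hwA : AnalyticAt ℝ w 0 := ⟨_, hp.has_fpower_series_iterate_dslope_fslope p.order⟩
  have hw0 : w 0 ≠ 0 := hp.iterate_dslope_fslope_ne_zero hp0
  rw [hMeq] at hfac0
  simp only [sub_zero, smul_eq_mul] at hfac0
  -- choose a ball where everything holds
  obtain ⟨t1, ht1n, ht1A⟩ := hwA.exists_mem_nhds_analyticOnNhd
  have hmem : t1 ∩ {z : ℝ | V z - (V 0 + iteratedDeriv 2 V 0 / 2 * z ^ 2)
      = z ^ (M + 4) * w z} ∈ 𝓝 (0:ℝ) := Filter.inter_mem ht1n (Filter.Eventually.of_forall hfac0)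
  obtain ⟨δ, hδpos, hδsub⟩ := Metric.mem_nhds_iff.mp hmem
  have h0ball : (0:ℝ) ∈ Metric.ball (0:ℝ) δ := Metric.mem_ball_self hδpos
  have hwAn : AnalyticOnNhd ℝ w (Metric.ball (0:ℝ) δ) := fun x hx => ht1A x (hδsub hx).1
  have hVF : ∀ z ∈ Metric.ball (0:ℝ) δ, V z = Gf M (V 0) (iteratedDeriv 2 V 0 / 2) w z := by
    intro z hz
    have h2 := (hδsub hz).2
    simp only [Set.mem_setOf_eq] at h2
    unfold Gf
    linarith
  have chain := bh_chain Metric.isOpen_ball hwAn M (V 0) (iteratedDeriv 2 V 0 / 2) hVF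
  have hzero : ∀ x ∈ Set.Ioo (0:ℝ) (min δ ε),
      Psi M (V 0) (iteratedDeriv 2 V 0 / 2) w x = 0 := by
    intro x hx
    have hxb : x ∈ Metric.ball (0:ℝ) δ := by
      rw [Metric.mem_ball, Real.dist_eq, sub_zero, abs_of_pos hx.1]
      exact lt_of_lt_of_le hx.2 (min_le_left _ _)
    obtain ⟨d1, d2, d3, d4, d5⟩ := chain x hxb
    have hOD : ODE5 V x = 0 := hode x ⟨hx.1, lt_of_lt_of_le hx.2 (min_le_right _ _)⟩
    have heq : ODE5 V x = x ^ M * x ^ 3 * Psi M (V 0) (iteratedDeriv 2 V 0 / 2) w x := by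
      unfold ODE5
      rw [d1, d2, d3, d4, d5, hVF x hxb]
      exact bh_key M (V 0) (iteratedDeriv 2 V 0 / 2) w x
    have hx0 : x ≠ 0 := ne_of_gt hx.1
    have hprod : x ^ M * x ^ 3 * Psi M (V 0) (iteratedDeriv 2 V 0 / 2) w x = 0 :=
      heq.symm.trans hOD
    rcases mul_eq_zero.mp hprod with h | h
    · exact absurd h (mul_ne_zero (pow_ne_zero M hx0) (pow_ne_zero 3 hx0))
    · exact h
  have hcont := bh_cont M (V 0) (iteratedDeriv 2 V 0 / 2) Metric.isOpen_ball h0ball hwAn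
  have hP0 : Psi M (V 0) (iteratedDeriv 2 V 0 / 2) w 0 = 0 := by
    have l1 : Filter.Tendsto (Psi M (V 0) (iteratedDeriv 2 V 0 / 2) w) (𝓝[>] (0:ℝ))
        (𝓝 (Psi M (V 0) (iteratedDeriv 2 V 0 / 2) w 0)) :=
      hcont.continuousWithinAt.tendsto
    have hIoo : Set.Ioo (0:ℝ) (min δ ε) ∈ 𝓝[>] (0:ℝ) :=
      Ioo_mem_nhdsGT_of_mem ⟨le_refl 0, lt_min hδpos hε⟩
    have l2 : Filter.Tendsto (Psi M (V 0) (iteratedDeriv 2 V 0 / 2) w) (𝓝[>] (0:ℝ)) (𝓝 0) := by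
      have hev : Psi M (V 0) (iteratedDeriv 2 V 0 / 2) w =ᶠ[𝓝[>] (0:ℝ)] (fun _ => 0) :=
        Filter.eventually_of_mem hIoo fun x hx => hzero x hx
      rw [Filter.tendsto_congr' hev]
      exact tendsto_const_nhds
    exact tendsto_nhds_unique l1 l2
  have hval : Psi M (V 0) (iteratedDeriv 2 V 0 / 2) w 0
      = w 0 * ((-1536) + (-1408)*(M:ℝ) + (-384)*(M:ℝ)^2 + (-32)*(M:ℝ)^3 + 1536*(V 0)
        + 2560*(V 0)*(M:ℝ) + 1584*(V 0)*(M:ℝ)^2 + 452*(V 0)*(M:ℝ)^3 + 60*(V 0)*(M:ℝ)^4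
        + 3*(V 0)*(M:ℝ)^5) := by
    unfold Psi PsiA PsiB
    ring
  have hK := bh_Kpos M hV₀
  rw [hval] at hP0
  rcases mul_eq_zero.mp hP0 with h | h
  · exact hw0 h
  · linarith
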